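/- Let S be an additively reduced, additively Furstenberg semidomain with A₊(S) = S^×, and G a torsion-free abelian group. Every binomial f = s_0 x^{g_0} + s_1 x^{g_1} ∈ S[G] with s_0, s_1 ∈ S* both non-units of S can be written as the sum of two irreducible elements of S[G]. -/

import Mathlib

/-- Witness that `S` is a semidomain: an injective semiring hom into an integral domain. -/
structure SemidomainWitness (S : Type*) [CommSemiring S] where
  D : Type
  [commRing : CommRing D]
  [isDomain : IsDomain D]
  emb : S →+* D
  inj : Function.Injective emb

/-- `S` is a semidomain, i.e. (isomorphic to) a subsemiring of an integral domain. -/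
def IsSemidomain (S : Type*) [CommSemiring S] : Prop := Nonempty (SemidomainWitness S)

/-- `S` is additively reduced: `0` is the only additively invertible element. -/
def AddReduced (S : Type*) [AddZeroClass S] : Prop := ∀ a b : S, a + b = 0 → a = 0

/-- `s` is an atom of the additive monoid `(S, +)` (for `S` additively reduced):
it is nonzero and cannot be written as a sum of two nonzero elements. -/
def IsAddAtom {S : Type*} [AddZeroClass S] (s : S) : Prop :=
  s ≠ 0 ∧ ∀ a b : S, s = a + b → a = 0 ∨ b = 0

/-- `S` is additively Furstenberg: every nonzero element is divisible in `(S, +)`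
by an additive atom. -/
def AddFurstenberg (S : Type*) [AddZeroClass S] : Prop :=
  ∀ s : S, s ≠ 0 → ∃ a t : S, IsAddAtom a ∧ s = a + t


section GroupAlg
variable {S : Type*} [CommSemiring S] {G : Type*} [AddCommGroup G]

/-- A monomial `s·x^g` in the group semidomain `S[G]`. -/
def IsMonomial (f : AddMonoidAlgebra S G) : Prop :=
  ∃ (g : G) (s : S), f = AddMonoidAlgebra.single g s

/-- `f` is monolithic: every factorization of `f` in `S[G]` has a monomial factor. -/
def Monolithic (f : AddMonoidAlgebra S G) : Prop :=
  f ≠ 0 ∧ ∀ p q : AddMonoidAlgebra S G, f = p * q → IsMonomial p ∨ IsMonomial q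

end GroupAlg

section AuxLemmas
open AddMonoidAlgebra Finsupp
open scoped Pointwise

variable {S : Type*} [CommSemiring S] {G : Type*} [AddCommGroup G]

lemma addReduced_sum {ι : Type*} (hred : AddReduced S) (s : Finset ι) (f : ι → S)
    (hs : ∑ i ∈ s, f i = 0) : ∀ i ∈ s, f i = 0 := by
  classical
  induction s using Finset.cons_induction with
  | empty => simp
  | cons a s ha ih =>
    rw [Finset.sum_cons] at hs
    have h1 : f a = 0 := hred _ _ hs
    rw [h1, zero_add] at hs
    intro i hi
    rcases Finset.mem_cons.mp hi with rfl | hi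
    · exact h1
    · exact ih hs i hi

lemma noZeroDivisors_of_semidomain (hS : IsSemidomain S) : NoZeroDivisors S := by
  obtain ⟨w⟩ := hS
  letI := w.commRing
  letI := w.isDomain
  refine ⟨fun {a b} hab => ?_⟩
  have h0 : w.emb a * w.emb b = 0 := by rw [← map_mul, hab, map_zero]
  rcases mul_eq_zero.mp h0 with h | h
  · exact Or.inl (w.inj (by rw [h, map_zero]))
  · exact Or.inr (w.inj (by rw [h, map_zero]))

lemma support_mul_eq [DecidableEq G] (hS : IsSemidomain S) (hred : AddReduced S)
    (p q : AddMonoidAlgebra S G) : (p * q).coeff.support = p.coeff.support + q.coeff.support := by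
  classical
  haveI := noZeroDivisors_of_semidomain hS
  apply Finset.Subset.antisymm (AddMonoidAlgebra.support_coeff_mul_subset p q)
  intro x hx
  rw [Finset.mem_add] at hx
  obtain ⟨a, ha, b, hb, rfl⟩ := hx
  rw [Finsupp.mem_support_iff] at ha hb ⊢
  intro hzero
  rw [AddMonoidAlgebra.coeff_mul] at hzero
  simp only [Finsupp.sum] at hzero
  have h1 := addReduced_sum hred _ _ hzero a (Finsupp.mem_support_iff.mpr ha)
  have h2 := addReduced_sum hred _ _ h1 b (Finsupp.mem_support_iff.mpr hb)
  rw [if_pos rfl] at h2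
  exact (mul_ne_zero ha hb) h2

lemma two_torsion_cancel (htf : ∀ (g : G) (n : ℕ), n ≠ 0 → n • g = 0 → g = 0)
    {a1 a2 b1 b2 : G} (e1 : a2 + b1 = a1 + b2) (e2 : a2 + b2 = a1 + b1) : a2 = a1 := by
  have e3 : (a2 + b1) + (a2 + b2) = (a1 + b2) + (a1 + b1) := by rw [e1, e2]
  rw [add_add_add_comm a2 b1 a2 b2, add_add_add_comm a1 b2 a1 b1,
    add_comm b2 b1] at e3
  have e4 : a2 + a2 = a1 + a1 := add_right_cancel e3
  have e5 : (2 : ℕ) • (a2 - a1) = 0 := by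
    rw [two_nsmul, sub_add_sub_comm, e4, sub_self]
  exact sub_eq_zero.mp (htf _ 2 two_ne_zero e5)

lemma sumset_big [DecidableEq G] (htf : ∀ (g : G) (n : ℕ), n ≠ 0 → n • g = 0 → g = 0)
    {A B : Finset G} {g h : G} (hgh : g ≠ h) (hAB : A + B = {g, h}) :
    A.card = 1 ∨ B.card = 1 := by
  classical
  by_contra hc
  push_neg at hc
  obtain ⟨hA1, hB1⟩ := hc
  have hgmem : g ∈ A + B := by rw [hAB]; simp
  obtain ⟨a0, ha0, b0, hb0, _⟩ := Finset.mem_add.mp hgmem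
  have hA2 : 1 < A.card := by
    have := Finset.card_pos.mpr ⟨a0, ha0⟩; omega
  have hB2 : 1 < B.card := by
    have := Finset.card_pos.mpr ⟨b0, hb0⟩; omega
  obtain ⟨a1, ha1, a2, ha2, haa⟩ := Finset.one_lt_card.mp hA2
  obtain ⟨b1, hb1, b2, hb2, hbb⟩ := Finset.one_lt_card.mp hB2
  have mem : ∀ x ∈ A, ∀ y ∈ B, x + y = g ∨ x + y = h := by
    intro x hx y hy
    have : x + y ∈ A + B := Finset.add_mem_add hx hy
    rw [hAB] at this
    simpa using this
  have hu := mem a1 ha1 b1 hb1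
  have hv := mem a1 ha1 b2 hb2
  have hw := mem a2 ha2 b1 hb1
  have hz := mem a2 ha2 b2 hb2
  rcases hu with hu | hu <;> rcases hv with hv | hv
  · exact hbb (add_left_cancel (hu.trans hv.symm))
  · -- u = g, v = h
    rcases hw with hw | hw
    · exact haa (add_right_cancel (hu.trans hw.symm))
    · rcases hz with hz | hz
      · exact haa (two_torsion_cancel htf (hw.trans hv.symm) (hz.trans hu.symm)).symm
      · exact haa (add_right_cancel (hv.trans hz.symm))
  · -- u = h, v = g
    rcases hw with hw | hw
    · rcases hz with hz | hz
      · exact haa (add_right_cancel (hv.trans hz.symm))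
      · exact haa (two_torsion_cancel htf (hw.trans hv.symm) (hz.trans hu.symm)).symm
    · exact haa (add_right_cancel (hu.trans hw.symm))
  · exact hbb (add_left_cancel (hu.trans hv.symm))

lemma binom_irreducible (hS : IsSemidomain S) (hred : AddReduced S)
    (htf : ∀ (g : G) (n : ℕ), n ≠ 0 → n • g = 0 → g = 0)
    {u s : S} {g h : G} (hu : IsUnit u) (hs : s ≠ 0) (hgh : g ≠ h) :
    Irreducible (AddMonoidAlgebra.single g u + AddMonoidAlgebra.single h s) := by
  classical
  haveI := noZeroDivisors_of_semidomain hS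
  haveI : Nontrivial S := ⟨⟨s, 0, hs⟩⟩
  have hu0 : u ≠ 0 := hu.ne_zero
  set b : AddMonoidAlgebra S G :=
    AddMonoidAlgebra.single g u + AddMonoidAlgebra.single h s with hb
  have hdisj : Disjoint (AddMonoidAlgebra.single g u : AddMonoidAlgebra S G).coeff.support
      (AddMonoidAlgebra.single h s : AddMonoidAlgebra S G).coeff.support := by
    rw [AddMonoidAlgebra.coeff_single, AddMonoidAlgebra.coeff_single, Finsupp.support_single_ne_zero g hu0, Finsupp.support_single_ne_zero h hs]
    simpa using hgh
  have hsupp : b.coeff.support = {g, h} := by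
    rw [hb, AddMonoidAlgebra.coeff_add, Finsupp.support_add_eq hdisj, AddMonoidAlgebra.coeff_single,
      AddMonoidAlgebra.coeff_single, Finsupp.support_single_ne_zero g hu0,
      Finsupp.support_single_ne_zero h hs]
    ext x; simp
  have hbg : b.coeff g = u := by
    rw [hb, AddMonoidAlgebra.coeff_add, Finsupp.add_apply, AddMonoidAlgebra.coeff_single,
      AddMonoidAlgebra.coeff_single, Finsupp.single_eq_same,
      Finsupp.single_eq_of_ne' (Ne.symm (Ne.symm hgh)).symm, add_zero]
  have hbne : b ≠ 0 := by
    intro h0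
    have : b.coeff g = 0 := by rw [h0]; rfl
    rw [hbg] at this
    exact hu0 this
  have hsupp1 : (1 : AddMonoidAlgebra S G).coeff.support = {0} := by
    rw [AddMonoidAlgebra.one_def, AddMonoidAlgebra.coeff_single, Finsupp.support_single_ne_zero _ one_ne_zero]
  constructor
  · -- not a unit
    intro hbu
    obtain ⟨v, hv⟩ := isUnit_iff_exists_inv.mp hbu
    have hvne : v ≠ 0 := by
      intro h0
      rw [h0, mul_zero] at hv
      have : (0 : AddMonoidAlgebra S G).coeff (0 : G) = (1 : AddMonoidAlgebra S G).coeff (0 : G) := by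
        rw [hv]
      rw [AddMonoidAlgebra.one_def, AddMonoidAlgebra.coeff_single, Finsupp.single_eq_same] at this
      exact one_ne_zero this.symm
    have hmul : b.coeff.support + v.coeff.support = {0} := by
      rw [← support_mul_eq hS hred, hv, hsupp1]
    obtain ⟨c, hc⟩ := Finsupp.support_nonempty_iff.mpr (mt AddMonoidAlgebra.coeff_eq_zero.mp hvne)
    have hg0 : g + c ∈ ({0} : Finset G) := by
      rw [← hmul]; exact Finset.add_mem_add (by rw [hsupp]; simp) hc
    have hh0 : h + c ∈ ({0} : Finset G) := by
      rw [← hmul]; exact Finset.add_mem_add (by rw [hsupp]; simp) hc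
    simp only [Finset.mem_singleton] at hg0 hh0
    exact hgh (add_right_cancel (hg0.trans hh0.symm))
  · -- every factorization has a unit factor
    intro p q hpq
    have key : ∀ p q : AddMonoidAlgebra S G, b = p * q → p.coeff.support.card = 1 → IsUnit p := by
      intro p q hpq hcard
      obtain ⟨k, hk⟩ := Finset.card_eq_one.mp hcard
      obtain ⟨hck, hpk⟩ := Finsupp.support_eq_singleton.mp hk
      set c := p.coeff k with hc
      replace hpk : p = AddMonoidAlgebra.single k c := AddMonoidAlgebra.ext hpk
      have hbg' : u = c * q.coeff (-k + g) := by
        rw [← hbg, hpq, hpk, AddMonoidAlgebra.coeff_single_mul_apply]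
      have hcunit : IsUnit c := isUnit_of_mul_isUnit_left (hbg' ▸ hu)
      obtain ⟨cu, hcu⟩ := hcunit
      rw [hpk]
      apply isUnit_iff_exists_inv.mpr
      refine ⟨AddMonoidAlgebra.single (-k) (↑cu⁻¹), ?_⟩
      rw [AddMonoidAlgebra.single_mul_single, ← hcu, Units.mul_inv,
        add_neg_cancel]
      exact AddMonoidAlgebra.one_def.symm
    have hPQ : p.coeff.support + q.coeff.support = {g, h} := by
      rw [← support_mul_eq hS hred, ← hpq, hsupp]
    rcases sumset_big htf hgh hPQ with h1 | h1
    · exact Or.inl (key p q hpq h1)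
    · exact Or.inr (key q p (by rw [hpq, mul_comm]) h1)

end AuxLemmas

/-- For `S` additively reduced, additively Furstenberg with `A₊(S) = S^×` and `G`
torsion-free abelian: a binomial both of whose nonzero coefficients are non-units is a sum
of two irreducible elements of `S[G]`. -/
theorem binomial_sum_of_two_irreducibles
    {S : Type*} [CommSemiring S] {G : Type*} [AddCommGroup G]
    (hS : IsSemidomain S) (hred : AddReduced S) (hfur : AddFurstenberg S)
    (hatoms : ∀ a : S, IsAddAtom a ↔ IsUnit a)
    (htf : ∀ (g : G) (n : ℕ), n ≠ 0 → n • g = 0 → g = 0)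
    (s₀ s₁ : S) (g₀ g₁ : G) (hs₀ : s₀ ≠ 0) (hs₁ : s₁ ≠ 0) (hgg : g₀ ≠ g₁)
    (hu₀ : ¬ IsUnit s₀) (hu₁ : ¬ IsUnit s₁)
    (f : AddMonoidAlgebra S G)
    (hf : f = AddMonoidAlgebra.single g₀ s₀ + AddMonoidAlgebra.single g₁ s₁) :
    ∃ p q : AddMonoidAlgebra S G, Irreducible p ∧ Irreducible q ∧ f = p + q := by
  obtain ⟨a, t, hat, hst⟩ := hfur s₀ hs₀
  obtain ⟨b, r, hbr, hsr⟩ := hfur s₁ hs₁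
  have hau : IsUnit a := (hatoms a).mp hat
  have hbu : IsUnit b := (hatoms b).mp hbr
  have ht0 : t ≠ 0 := by
    intro h0; rw [h0, add_zero] at hst; exact hu₀ (hst ▸ hau)
  have hr0 : r ≠ 0 := by
    intro h0; rw [h0, add_zero] at hsr; exact hu₁ (hsr ▸ hbu)
  refine ⟨AddMonoidAlgebra.single g₀ a + AddMonoidAlgebra.single g₁ r,
    AddMonoidAlgebra.single g₁ b + AddMonoidAlgebra.single g₀ t, ?_, ?_, ?_⟩
  · exact binom_irreducible hS hred htf hau hr0 hgg
  · exact binom_irreducible hS hred htf hbu ht0 hgg.symm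
  · rw [hf, hst, hsr, AddMonoidAlgebra.single_add, AddMonoidAlgebra.single_add]
    abel
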